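/- Let F: ℕ → ℂ satisfy the Wintner Assumption ∑_d |F'(d)|/d < ∞, and suppose the Wintner transform has finite support: Win_q F = 0 for all q > Q. Then F has the finite Ramanujan expansion F(a) = ∑_{q ≤ Q} (Win_q F) c_q(a) for every a ∈ ℕ. -/

import Mathlib

open scoped BigOperators

/-- The Ramanujan sum `c_q(a)`, via Kluyver's formula. -/
noncomputable def ramanujanSum (q a : ℕ) : ℤ :=
  ∑ d ∈ (Nat.gcd a q).divisors, (d : ℤ) * ArithmeticFunction.moebius (q / d)

/-- The Eratosthenes transform `F' = F ∗ μ`. -/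
noncomputable def eratosthenes (F : ℕ → ℂ) (d : ℕ) : ℂ :=
  ∑ e ∈ d.divisors, (ArithmeticFunction.moebius (d / e) : ℂ) * F e

/-- The Wintner coefficient `Win_q F = ∑_{d ≡ 0 mod q} F'(d)/d`. -/
noncomputable def winCoeff (F : ℕ → ℂ) (q : ℕ) : ℂ :=
  ∑' d : ℕ, if q ∣ d then eratosthenes F d / d else 0

open Finset ArithmeticFunction Filter
open scoped ArithmeticFunction.Moebius ArithmeticFunction.zeta

section Aux

lemma sum_moebius_divisors' (n : ℕ) :
    ∑ d ∈ n.divisors, μ d = if n = 1 then 1 else 0 := by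
  have h : (μ * ζ : ArithmeticFunction ℤ) n = (1 : ArithmeticFunction ℤ) n := by
    rw [ArithmeticFunction.moebius_mul_coe_zeta]
  rwa [ArithmeticFunction.coe_mul_zeta_apply, ArithmeticFunction.one_apply] at h

lemma filter_dvd_divisors_eq' {e d : ℕ} (he : e ∣ d) (hd : d ≠ 0) :
    (d.divisors).filter (fun q => e ∣ q) = (d / e).divisors.image (fun u => e * u) := by
  have he0 : e ≠ 0 := by rintro rfl; rw [zero_dvd_iff] at he; exact hd he
  have hde : d / e ≠ 0 :=
    (Nat.div_pos (Nat.le_of_dvd (Nat.pos_of_ne_zero hd) he) (Nat.pos_of_ne_zero he0)).ne'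
  ext q
  simp only [Finset.mem_filter, Nat.mem_divisors, Finset.mem_image]
  constructor
  · rintro ⟨⟨hqd, _⟩, u, rfl⟩
    exact ⟨u, ⟨(Nat.dvd_div_iff_mul_dvd he).2 hqd, hde⟩, rfl⟩
  · rintro ⟨u, ⟨hu, _⟩, rfl⟩
    rw [Nat.dvd_div_iff_mul_dvd he] at hu
    exact ⟨⟨hu, hd⟩, Dvd.intro u rfl⟩

/-- `∑_{q ∣ d, e ∣ q} μ(q/e) = [e = d]`. -/
lemma sum_moebius_div_right' {e d : ℕ} (hd : d ≠ 0) :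
    ∑ q ∈ d.divisors, (if e ∣ q then μ (q / e) else 0) = if e = d then 1 else 0 := by
  by_cases he : e ∣ d
  · have he0 : e ≠ 0 := by rintro rfl; rw [zero_dvd_iff] at he; exact hd he
    rw [← Finset.sum_filter, filter_dvd_divisors_eq' he hd, Finset.sum_image
      (fun a _ b _ h => Nat.eq_of_mul_eq_mul_left (Nat.pos_of_ne_zero he0) h)]
    have : ∀ u ∈ (d / e).divisors, μ (e * u / e) = μ u := by
      intro u _; rw [Nat.mul_div_cancel_left u (Nat.pos_of_ne_zero he0)]
    rw [Finset.sum_congr rfl this, sum_moebius_divisors']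
    have : d / e = 1 ↔ e = d := by
      constructor
      · intro h; rw [← Nat.div_mul_cancel he, h, one_mul]
      · rintro rfl; exact Nat.div_self (Nat.pos_of_ne_zero hd)
    simp [this]
  · have h1 : ∀ q ∈ d.divisors, (if e ∣ q then μ (q / e) else 0) = 0 := by
      intro q hq
      rw [Nat.mem_divisors] at hq
      rw [if_neg (fun hc => he (hc.trans hq.1))]
    rw [Finset.sum_congr rfl h1, Finset.sum_const_zero, if_neg (fun hc => he (by rw [hc]))]

/-- `∑_{d ∣ e, q ∣ d} μ(e/d) = [q = e]`. -/
lemma sum_moebius_div_left' {q e : ℕ} (he : e ≠ 0) :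
    ∑ d ∈ e.divisors, (if q ∣ d then μ (e / d) else 0) = if q = e then 1 else 0 := by
  by_cases hq : q ∣ e
  · have hq0 : q ≠ 0 := by rintro rfl; rw [zero_dvd_iff] at hq; exact he hq
    rw [← Finset.sum_filter, filter_dvd_divisors_eq' hq he, Finset.sum_image
      (fun a _ b _ h => Nat.eq_of_mul_eq_mul_left (Nat.pos_of_ne_zero hq0) h)]
    have h2 : ∀ u ∈ (e / q).divisors, μ (e / (q * u)) = μ ((e / q) / u) := by
      intro u _; rw [Nat.div_div_eq_div_mul]
    rw [Finset.sum_congr rfl h2, Nat.sum_div_divisors (e / q) μ, sum_moebius_divisors']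
    have : e / q = 1 ↔ q = e := by
      constructor
      · intro h; rw [← Nat.div_mul_cancel hq, h, one_mul]
      · rintro rfl; exact Nat.div_self (Nat.pos_of_ne_zero he)
    simp [this]
  · have h1 : ∀ d ∈ e.divisors, (if q ∣ d then μ (e / d) else 0) = 0 := by
      intro d hd
      rw [Nat.mem_divisors] at hd
      rw [if_neg (fun hc => hq (hc.trans hd.1))]
    rw [Finset.sum_congr rfl h1, Finset.sum_const_zero, if_neg (fun hc => hq (by rw [hc]))]

lemma sum_moebius_dvd_coprime' {n k : ℕ} (hn : n ≠ 0) :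
    ∑ m ∈ n.divisors, (if m ∣ k then μ m else 0) = if Nat.gcd n k = 1 then 1 else 0 := by
  rw [← Finset.sum_filter]
  have h : (n.divisors).filter (fun m => m ∣ k) = (Nat.gcd n k).divisors := by
    ext m
    simp only [Finset.mem_filter, Nat.mem_divisors, Nat.dvd_gcd_iff]
    have : Nat.gcd n k ≠ 0 := Nat.gcd_ne_zero_left hn
    tauto
  rw [h, sum_moebius_divisors']

/-- `∑_{q ∣ d} c_q(a) = d·[d ∣ a]`. -/
lemma sum_ramanujan' {d a : ℕ} (hd : d ≠ 0) :
    ∑ q ∈ d.divisors, ramanujanSum q a = if d ∣ a then (d : ℤ) else 0 := by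
  have step1 : ∀ q ∈ d.divisors,
      ramanujanSum q a
        = ∑ e ∈ d.divisors, (if e ∣ a ∧ e ∣ q then (e : ℤ) * μ (q / e) else 0) := by
    intro q hq
    rw [Nat.mem_divisors] at hq
    have hgd : Nat.gcd a q ∣ d := (Nat.gcd_dvd_right a q).trans hq.1
    rw [ramanujanSum, ← Nat.divisors_filter_dvd_of_dvd hd hgd, Finset.sum_filter]
    refine Finset.sum_congr rfl fun e _ => ?_
    congr 1
    · exact propext Nat.dvd_gcd_iff
  rw [Finset.sum_congr rfl step1, Finset.sum_comm]
  have step2 : ∀ e ∈ d.divisors,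
      ∑ q ∈ d.divisors, (if e ∣ a ∧ e ∣ q then (e : ℤ) * μ (q / e) else 0)
        = if e = d then (if e ∣ a then (e : ℤ) else 0) else 0 := by
    intro e _
    by_cases hea : e ∣ a
    · have h : ∀ q ∈ d.divisors, (if e ∣ a ∧ e ∣ q then (e : ℤ) * μ (q / e) else 0)
          = (e : ℤ) * (if e ∣ q then μ (q / e) else 0) := by
        intro q _
        by_cases heq : e ∣ q
        · rw [if_pos ⟨hea, heq⟩, if_pos heq]
        · rw [if_neg (fun h => heq h.2), if_neg heq, mul_zero]
      rw [Finset.sum_congr rfl h, ← Finset.mul_sum, sum_moebius_div_right' hd, if_pos hea]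
      by_cases hed : e = d
      · rw [if_pos hed, if_pos hed, mul_one]
      · rw [if_neg hed, if_neg hed, mul_zero]
    · have h : ∀ q ∈ d.divisors, (if e ∣ a ∧ e ∣ q then (e : ℤ) * μ (q / e) else 0) = 0 := by
        intro q _; rw [if_neg (fun h => hea h.1)]
      rw [Finset.sum_congr rfl h, Finset.sum_const_zero, if_neg hea, ite_self]
  rw [Finset.sum_congr rfl step2, Finset.sum_ite_eq' d.divisors d
    (fun e => if e ∣ a then (e : ℤ) else 0), if_pos (Nat.mem_divisors_self d hd)]

lemma summable_ind' {c : ℕ → ℂ} (hc : Summable c) (t : ℕ) :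
    Summable (fun d => if t ∣ d then c d else 0) := by
  refine (hc.indicator {d | t ∣ d}).congr fun d => ?_
  by_cases h : t ∣ d <;> simp [Set.indicator_apply, h]

/-- Uniqueness: a summable function all of whose "sums over multiples" vanish is zero. -/
lemma uniq_lemma' {c : ℕ → ℂ} (hc : Summable c) (h0 : c 0 = 0)
    (hC : ∀ q : ℕ, q ≠ 0 → (∑' d : ℕ, if q ∣ d then c d else 0) = 0) :
    ∀ d : ℕ, d ≠ 0 → c d = 0 := by
  intro d₀ hd₀
  have hd₀' : 0 < d₀ := Nat.pos_of_ne_zero hd₀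
  have hinj : Function.Injective (fun k : ℕ => d₀ * k) :=
    fun x y h => Nat.eq_of_mul_eq_mul_left hd₀' h
  have hc0 : Summable (fun k => c (d₀ * k)) := hc.comp_injective hinj
  have step : ∀ n : ℕ, n ≠ 0 →
      (∑' k : ℕ, if Nat.gcd n k = 1 then c (d₀ * k) else 0) = 0 := by
    intro n hn
    have h1 : ∀ m ∈ n.divisors,
        Summable (fun d => (μ m : ℂ) * (if (d₀ * m) ∣ d then c d else 0)) :=
      fun m _ => (summable_ind' hc (d₀ * m)).mul_left _
    have h2 : (∑ m ∈ n.divisors, ∑' d : ℕ,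
        (μ m : ℂ) * (if (d₀ * m) ∣ d then c d else 0)) = 0 := by
      refine Finset.sum_eq_zero fun m hm => ?_
      rw [Nat.mem_divisors] at hm
      have hm0 : d₀ * m ≠ 0 := by
        have : m ≠ 0 := fun h => hm.2 (by simpa [h] using hm.1)
        positivity
      rw [tsum_mul_left, hC _ hm0, mul_zero]
    rw [← Summable.tsum_finsetSum h1] at h2
    have h3 : (∑' d : ℕ, ∑ m ∈ n.divisors, (μ m : ℂ) * (if (d₀ * m) ∣ d then c d else 0))
        = ∑' k : ℕ, ∑ m ∈ n.divisors,
            (μ m : ℂ) * (if (d₀ * m) ∣ (d₀ * k) then c (d₀ * k) else 0) := by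
      refine (hinj.tsum_eq ?_).symm
      intro d hd
      by_contra hr
      apply hd
      refine Finset.sum_eq_zero fun m hm => ?_
      have h : ¬ (d₀ * m ∣ d) := by
        rintro ⟨u, rfl⟩
        exact hr ⟨m * u, by ring⟩
      rw [if_neg h, mul_zero]
    have h4 : ∀ k : ℕ,
        (∑ m ∈ n.divisors, (μ m : ℂ) * (if (d₀ * m) ∣ (d₀ * k) then c (d₀ * k) else 0))
          = if Nat.gcd n k = 1 then c (d₀ * k) else 0 := by
      intro k
      have h : ∀ m ∈ n.divisors, (μ m : ℂ) * (if (d₀ * m) ∣ (d₀ * k) then c (d₀ * k) else 0)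
          = (if m ∣ k then (μ m : ℂ) else 0) * c (d₀ * k) := by
        intro m _
        simp only [Nat.mul_dvd_mul_iff_left hd₀']
        by_cases h : m ∣ k
        · rw [if_pos h, if_pos h]
        · rw [if_neg h, if_neg h, mul_zero, zero_mul]
      rw [Finset.sum_congr rfl h, ← Finset.sum_mul]
      have hcast : (∑ m ∈ n.divisors, if m ∣ k then (μ m : ℂ) else 0)
          = ((∑ m ∈ n.divisors, if m ∣ k then μ m else 0 : ℤ) : ℂ) := by
        push_cast
        exact Finset.sum_congr rfl fun m _ => by split_ifs <;> simp
      rw [hcast, sum_moebius_dvd_coprime' hn]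
      by_cases h : Nat.gcd n k = 1 <;> simp [h]
    rw [h3] at h2
    exact ((tsum_congr h4).symm.trans h2)
  have hfac : ∀ N : ℕ, (N.factorial) ≠ 0 := fun N => (Nat.factorial_pos N).ne'
  have hlim : Tendsto
      (fun N : ℕ => ∑' k : ℕ, if Nat.gcd (N.factorial) k = 1 then c (d₀ * k) else 0)
      atTop (nhds (∑' k : ℕ, if k = 1 then c (d₀ * k) else 0)) := by
    refine tendsto_tsum_of_dominated_convergence (bound := fun k => ‖c (d₀ * k)‖) hc0.norm ?_ ?_
    · intro k
      match k with
      | 0 =>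
        have h : ∀ N : ℕ, (if Nat.gcd (N.factorial) 0 = 1 then c (d₀ * 0) else 0) = 0 := by
          intro N; simp [h0]
        simp only [h]
        simpa using tendsto_const_nhds
      | 1 =>
        have h : ∀ N : ℕ, (if Nat.gcd (N.factorial) 1 = 1 then c (d₀ * 1) else 0) = c (d₀ * 1) := by
          intro N; simp
        simp only [h]
        simpa using tendsto_const_nhds
      | (k+2) =>
        rw [if_neg (by omega)]
        refine Tendsto.congr' ?_ tendsto_const_nhds
        filter_upwards [eventually_ge_atTop (k+2)] with N hN
        have hdvd : (k+2) ∣ N.factorial := Nat.dvd_factorial (by omega) hN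
        have h : Nat.gcd (N.factorial) (k+2) = k+2 := Nat.gcd_eq_right hdvd
        rw [if_neg (by omega)]
    · filter_upwards with N k
      split_ifs <;> simp
  have heq0 : ∀ N : ℕ,
      (∑' k : ℕ, if Nat.gcd (N.factorial) k = 1 then c (d₀ * k) else 0) = 0 :=
    fun N => step _ (hfac N)
  have h5 : (∑' k : ℕ, if k = 1 then c (d₀ * k) else 0) = 0 := by
    have h := hlim
    simp only [heq0] at h
    exact tendsto_nhds_unique h tendsto_const_nhds
  have h6 : (∑' k : ℕ, if k = 1 then c (d₀ * k) else 0) = c d₀ := by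
    have h : (fun k : ℕ => if k = 1 then c (d₀ * k) else 0)
        = fun k : ℕ => if k = 1 then c d₀ else 0 := by
      funext k; split_ifs with h <;> simp [h]
    rw [h, tsum_ite_eq]
  rw [← h6, h5]

end Aux

/-- Under the Wintner Assumption, if the Wintner transform vanishes beyond `Q`,
then `F` has the finite Ramanujan expansion `F(a) = ∑_{q ≤ Q} (Win_q F) c_q(a)`. -/
theorem stmt6 (F : ℕ → ℂ)
    (hWA : Summable (fun d : ℕ => ‖eratosthenes F d‖ / d))
    (Q : ℕ) (hQ : ∀ q : ℕ, Q < q → winCoeff F q = 0)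
    (a : ℕ) (ha : 0 < a) :
    F a = ∑ q ∈ Finset.Icc 1 Q, winCoeff F q * (ramanujanSum q a : ℂ) := by
  classical
  have ha0 : a ≠ 0 := ha.ne'
  set b : ℕ → ℂ := fun d => eratosthenes F d / d with hbdef
  have herat0 : eratosthenes F 0 = 0 := by simp [eratosthenes]
  have hb0 : b 0 = 0 := by simp [hbdef, herat0]
  have hbsum : Summable b := by
    refine Summable.of_norm (hWA.congr fun d => ?_)
    simp [hbdef, norm_div]
  -- the candidate finitely supported inverse
  set bt : ℕ → ℂ := fun d =>
    ∑ q ∈ (Finset.Icc 1 Q).filter (fun q => d ∣ q), (μ (q / d) : ℂ) * winCoeff F q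
    with hbtdef
  have hbt_out : ∀ d, d ∉ Finset.Icc 1 Q → bt d = 0 := by
    intro d hd
    rw [hbtdef]
    refine Finset.sum_eq_zero ?_
    intro q hq
    exfalso
    rw [Finset.mem_filter, Finset.mem_Icc] at hq
    rcases Nat.eq_zero_or_pos d with rfl | hd1
    · rw [Nat.zero_dvd] at hq; omega
    · exact hd (Finset.mem_Icc.2 ⟨hd1, le_trans (Nat.le_of_dvd (by omega) hq.2) hq.1.2⟩)
  have hbtsum : Summable bt := summable_of_ne_finset_zero hbt_out
  -- Icc-filter = divisors
  have hfilt : ∀ e ∈ Finset.Icc 1 Q,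
      (Finset.Icc 1 Q).filter (fun d => d ∣ e) = e.divisors := by
    intro e he
    rw [Finset.mem_Icc] at he
    ext d
    simp only [Finset.mem_filter, Finset.mem_Icc, Nat.mem_divisors]
    constructor
    · rintro ⟨_, hde⟩; exact ⟨hde, by omega⟩
    · rintro ⟨hde, _⟩
      have hd0 : d ≠ 0 := by rintro rfl; rw [Nat.zero_dvd] at hde; omega
      exact ⟨⟨Nat.pos_of_ne_zero hd0, le_trans (Nat.le_of_dvd (by omega) hde) he.2⟩, hde⟩
  -- sums over multiples of bt recover winCoeff
  have hCbt : ∀ q : ℕ, q ≠ 0 → (∑' d : ℕ, if q ∣ d then bt d else 0) = winCoeff F q := by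
    intro q hq0
    rw [tsum_eq_sum (s := Finset.Icc 1 Q)
      (fun d hd => by rw [hbt_out d hd, ite_self])]
    have step : ∀ d ∈ Finset.Icc 1 Q, (if q ∣ d then bt d else 0)
        = ∑ e ∈ Finset.Icc 1 Q, (if q ∣ d ∧ d ∣ e then (μ (e / d) : ℂ) * winCoeff F e else 0) := by
      intro d _
      by_cases h : q ∣ d
      · rw [if_pos h, hbtdef]
        rw [← Finset.sum_filter]
        refine Finset.sum_congr ?_ (fun _ _ => rfl)
        ext e
        simp only [Finset.mem_filter]
        tauto
      · rw [if_neg h]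
        exact (Finset.sum_eq_zero fun e _ => by rw [if_neg (fun hc => h hc.1)]).symm
    rw [Finset.sum_congr rfl step, Finset.sum_comm]
    have step2 : ∀ e ∈ Finset.Icc 1 Q,
        (∑ d ∈ Finset.Icc 1 Q, if q ∣ d ∧ d ∣ e then (μ (e / d) : ℂ) * winCoeff F e else 0)
          = (if q = e then 1 else 0) * winCoeff F e := by
      intro e he
      have he0 : e ≠ 0 := by rw [Finset.mem_Icc] at he; omega
      have h1 : ∀ d ∈ Finset.Icc 1 Q, (if q ∣ d ∧ d ∣ e then (μ (e / d) : ℂ) * winCoeff F e else 0)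
          = (if d ∣ e then (if q ∣ d then (μ (e / d) : ℂ) else 0) else 0) * winCoeff F e := by
        intro d _
        by_cases h2 : q ∣ d <;> by_cases h3 : d ∣ e <;> simp [h2, h3]
      rw [Finset.sum_congr rfl h1, ← Finset.sum_mul, ← Finset.sum_filter, hfilt e he]
      congr 1
      have : (∑ d ∈ e.divisors, if q ∣ d then (μ (e / d) : ℂ) else 0)
          = ((∑ d ∈ e.divisors, if q ∣ d then μ (e / d) else 0 : ℤ) : ℂ) := by
        push_cast
        exact Finset.sum_congr rfl fun m _ => by split_ifs <;> simp
      rw [this, sum_moebius_div_left' he0]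
      split_ifs <;> simp
    rw [Finset.sum_congr rfl step2]
    have h7 : ∀ x ∈ Finset.Icc 1 Q, (if q = x then (1:ℂ) else 0) * winCoeff F x
        = if q = x then winCoeff F x else 0 := by
      intro x _; split_ifs <;> simp
    rw [Finset.sum_congr rfl h7, Finset.sum_ite_eq]
    by_cases hmem : q ∈ Finset.Icc 1 Q
    · rw [if_pos hmem]
    · rw [if_neg hmem, hQ q (by rw [Finset.mem_Icc] at hmem; omega)]
  -- b agrees with bt away from 0
  have hkey : ∀ d : ℕ, d ≠ 0 → b d = bt d := by
    have hsub : Summable (fun d => b d - bt d) := hbsum.sub hbtsum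
    have h0' : b 0 - bt 0 = 0 := by rw [hb0, hbt_out 0 (by simp), sub_zero]
    have hC : ∀ q : ℕ, q ≠ 0 → (∑' d : ℕ, if q ∣ d then b d - bt d else 0) = 0 := by
      intro q hq
      have hsplit : (fun d : ℕ => if q ∣ d then b d - bt d else 0)
          = fun d : ℕ => (if q ∣ d then b d else 0) - (if q ∣ d then bt d else 0) := by
        funext d; split_ifs <;> simp
      rw [hsplit, Summable.tsum_sub (summable_ind' hbsum q) (summable_ind' hbtsum q)]
      have h1 : (∑' d : ℕ, if q ∣ d then b d else 0) = winCoeff F q := rfl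
      rw [h1, hCbt q hq, sub_self]
    intro d hd
    exact sub_eq_zero.1 (uniq_lemma' hsub h0' hC d hd)
  have hsupp : ∀ d : ℕ, Q < d → eratosthenes F d = 0 := by
    intro d hd
    have hd0 : d ≠ 0 := by omega
    have h1 : b d = 0 := by
      rw [hkey d hd0, hbt_out d (by rw [Finset.mem_Icc]; omega)]
    simp only [hbdef] at h1
    rcases div_eq_zero_iff.1 h1 with h | h
    · exact h
    · exact absurd h (by exact_mod_cast hd0)
  have hW : ∀ q : ℕ, q ≠ 0 → winCoeff F q = ∑ d ∈ Finset.Icc 1 Q, (if q ∣ d then b d else 0) := by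
    intro q hq
    have h0 : winCoeff F q = ∑' d : ℕ, if q ∣ d then b d else 0 := rfl
    rw [h0, tsum_eq_sum]
    intro d hd
    by_cases h : q ∣ d
    · rw [if_pos h]
      rcases eq_or_ne d 0 with rfl | hd0
      · exact hb0
      · rw [hkey d hd0, hbt_out d hd]
    · rw [if_neg h]
  -- Möbius inversion: F a = ∑_{d ∣ a} F'(d)
  set G : ArithmeticFunction ℂ := ⟨fun n => if n = 0 then 0 else F n, if_pos rfl⟩ with hGdef
  have hGe : ∀ d : ℕ, eratosthenes F d = (G * (μ : ArithmeticFunction ℂ)) d := by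
    intro d
    rcases eq_or_ne d 0 with rfl | hd
    · rw [herat0, ArithmeticFunction.map_zero]
    · rw [ArithmeticFunction.mul_apply,
        Nat.sum_divisorsAntidiagonal (fun x y => G x * (μ : ArithmeticFunction ℂ) y),
        eratosthenes]
      refine Finset.sum_congr rfl fun e he => ?_
      rw [Nat.mem_divisors] at he
      have he0 : e ≠ 0 := by rintro rfl; exact hd (Nat.eq_zero_of_zero_dvd he.1)
      rw [ArithmeticFunction.intCoe_apply, mul_comm]
      congr 1
      simp [hGdef, he0]
  have hinv : F a = ∑ d ∈ a.divisors, eratosthenes F d := by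
    have h1 : ∑ d ∈ a.divisors, eratosthenes F d = ((G * μ) * ζ : ArithmeticFunction ℂ) a := by
      rw [ArithmeticFunction.coe_mul_zeta_apply]
      exact Finset.sum_congr rfl fun d _ => hGe d
    rw [h1, mul_assoc, ArithmeticFunction.coe_moebius_mul_coe_zeta, mul_one]
    simp [hGdef, ha0]
  rw [hinv]
  have hR : ∀ q ∈ Finset.Icc 1 Q, winCoeff F q * (ramanujanSum q a : ℂ)
      = ∑ d ∈ Finset.Icc 1 Q, (if q ∣ d then b d * (ramanujanSum q a : ℂ) else 0) := by
    intro q hq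
    have hq0 : q ≠ 0 := by rw [Finset.mem_Icc] at hq; omega
    rw [hW q hq0, Finset.sum_mul]
    exact Finset.sum_congr rfl fun d _ => by split_ifs <;> simp
  rw [Finset.sum_congr rfl hR, Finset.sum_comm]
  have hrow : ∀ d ∈ Finset.Icc 1 Q,
      (∑ q ∈ Finset.Icc 1 Q, if q ∣ d then b d * (ramanujanSum q a : ℂ) else 0)
        = if d ∣ a then eratosthenes F d else 0 := by
    intro d hd
    have hd0 : d ≠ 0 := by rw [Finset.mem_Icc] at hd; omega
    have h1 : ∀ q ∈ Finset.Icc 1 Q, (if q ∣ d then b d * (ramanujanSum q a : ℂ) else 0)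
        = b d * (if q ∣ d then (ramanujanSum q a : ℂ) else 0) := by
      intro q _; split_ifs <;> simp
    rw [Finset.sum_congr rfl h1, ← Finset.mul_sum, ← Finset.sum_filter, hfilt d hd]
    have h2 : (∑ q ∈ d.divisors, (ramanujanSum q a : ℂ))
        = ((∑ q ∈ d.divisors, ramanujanSum q a : ℤ) : ℂ) := by push_cast; rfl
    rw [h2, sum_ramanujan' hd0]
    by_cases h : d ∣ a
    · rw [if_pos h, if_pos h]
      simp only [hbdef]
      push_cast
      exact div_mul_cancel₀ _ (Nat.cast_ne_zero.2 hd0)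
    · rw [if_neg h, if_neg h]
      simp
  rw [Finset.sum_congr rfl hrow, ← Finset.sum_filter]
  refine (Finset.sum_subset ?_ ?_).symm
  · intro x hx
    rw [Finset.mem_filter, Finset.mem_Icc] at hx
    exact Nat.mem_divisors.2 ⟨hx.2, ha0⟩
  · intro x hx hnx
    rw [Nat.mem_divisors] at hx
    have hx1 : 1 ≤ x := Nat.pos_of_ne_zero (by rintro rfl; exact ha0 (Nat.eq_zero_of_zero_dvd hx.1))
    refine hsupp x ?_
    by_contra hc
    exact hnx (Finset.mem_filter.2 ⟨Finset.mem_Icc.2 ⟨hx1, by omega⟩, hx.1⟩)
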